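/- If R ∈ A⊗A⊗A and S ∈ B⊗B⊗B are canonical R-matrices for the k-algebras A and B, then T := R¹⊗S¹ ⊗ R²⊗S² ⊗ R³⊗S³ ∈ (A⊗B)⊗(A⊗B)⊗(A⊗B) is a canonical R-matrix for the tensor product algebra A⊗B. -/

import Mathlib

open TensorProduct

/-- If `R = ∑ᵢ xᵢ ⊗ yᵢ ⊗ zᵢ ∈ A ⊗ A ⊗ A` and
`S = ∑ⱼ uⱼ ⊗ vⱼ ⊗ wⱼ ∈ B ⊗ B ⊗ B` are canonical R-matrices for the `k`-algebras `A` and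
`B` (each satisfying the middle centralizing condition and the two normalizations, which
characterizes canonical R-matrices), then
`T := R¹⊗S¹ ⊗ R²⊗S² ⊗ R³⊗S³` is a canonical R-matrix for the tensor product algebra
`A ⊗ B`. -/
theorem tensor_product_of_canonical_R_matrices
    (k A B : Type*) [CommRing k] [Ring A] [Algebra k A] [Ring B] [Algebra k B]
    (ι κ : Type*) (s : Finset ι) (t : Finset κ)
    (x y z : ι → A) (u v w : κ → B)
    (hAcen : ∀ a : A,
      ∑ i ∈ s, x i ⊗ₜ[k] (a * y i) ⊗ₜ[k] z i
        = ∑ i ∈ s, x i ⊗ₜ[k] y i ⊗ₜ[k] (z i * a))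
    (hAnorm1 : ∑ i ∈ s, (x i * y i) ⊗ₜ[k] z i = (1 : A) ⊗ₜ[k] (1 : A))
    (hAnorm2 : ∑ i ∈ s, y i ⊗ₜ[k] (z i * x i) = (1 : A) ⊗ₜ[k] (1 : A))
    (hBcen : ∀ c : B,
      ∑ j ∈ t, u j ⊗ₜ[k] (c * v j) ⊗ₜ[k] w j
        = ∑ j ∈ t, u j ⊗ₜ[k] v j ⊗ₜ[k] (w j * c))
    (hBnorm1 : ∑ j ∈ t, (u j * v j) ⊗ₜ[k] w j = (1 : B) ⊗ₜ[k] (1 : B))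
    (hBnorm2 : ∑ j ∈ t, v j ⊗ₜ[k] (w j * u j) = (1 : B) ⊗ₜ[k] (1 : B)) :
    (∀ c : A ⊗[k] B,
      ∑ i ∈ s, ∑ j ∈ t,
          (x i ⊗ₜ[k] u j) ⊗ₜ[k] (c * (y i ⊗ₜ[k] v j)) ⊗ₜ[k] (z i ⊗ₜ[k] w j)
        = ∑ i ∈ s, ∑ j ∈ t,
          (x i ⊗ₜ[k] u j) ⊗ₜ[k] (y i ⊗ₜ[k] v j) ⊗ₜ[k] ((z i ⊗ₜ[k] w j) * c)) ∧
    (∑ i ∈ s, ∑ j ∈ t,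
        ((x i ⊗ₜ[k] u j) * (y i ⊗ₜ[k] v j)) ⊗ₜ[k] (z i ⊗ₜ[k] w j)
      = (1 : A ⊗[k] B) ⊗ₜ[k] (1 : A ⊗[k] B)) ∧
    (∑ i ∈ s, ∑ j ∈ t,
        (y i ⊗ₜ[k] v j) ⊗ₜ[k] ((z i ⊗ₜ[k] w j) * (x i ⊗ₜ[k] u j))
      = (1 : A ⊗[k] B) ⊗ₜ[k] (1 : A ⊗[k] B)) := by
  classical
  -- rearrangement map for the normalizations
  set φ : (A ⊗[k] A) ⊗[k] (B ⊗[k] B) →ₗ[k] (A ⊗[k] B) ⊗[k] (A ⊗[k] B) :=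
    (TensorProduct.tensorTensorTensorComm k A A B B).toLinearMap with hφ
  -- rearrangement map for the centralizing condition
  set ψ : ((A ⊗[k] A) ⊗[k] A) ⊗[k] ((B ⊗[k] B) ⊗[k] B) →ₗ[k]
      ((A ⊗[k] B) ⊗[k] (A ⊗[k] B)) ⊗[k] (A ⊗[k] B) :=
    (TensorProduct.map φ LinearMap.id).comp
      (TensorProduct.tensorTensorTensorComm k (A ⊗[k] A) A (B ⊗[k] B) B).toLinearMap with hψ
  refine ⟨?_, ?_, ?_⟩
  · intro c
    induction c using TensorProduct.induction_on with
    | zero => simp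
    | tmul a b =>
        have h := congrArg (fun p => ψ p)
          (congrArg₂ (fun p q => p ⊗ₜ[k] q) (hAcen a) (hBcen b))
        rw [Finset.sum_comm (s := s) (t := t), Finset.sum_comm (s := s) (t := t)]
        simpa [hψ, hφ, TensorProduct.sum_tmul, TensorProduct.tmul_sum, map_sum,
          Algebra.TensorProduct.tmul_mul_tmul] using h
    | add c₁ c₂ h₁ h₂ =>
        simp only [add_mul, mul_add, TensorProduct.tmul_add, TensorProduct.add_tmul,
          Finset.sum_add_distrib, h₁, h₂]
  · have h := congrArg (fun p => φ p)
      (congrArg₂ (fun p q => p ⊗ₜ[k] q) hAnorm1 hBnorm1)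
    rw [Finset.sum_comm (s := s) (t := t)]
    simpa [hφ, TensorProduct.sum_tmul, TensorProduct.tmul_sum, map_sum,
      Algebra.TensorProduct.tmul_mul_tmul, Algebra.TensorProduct.one_def] using h
  · have h := congrArg (fun p => φ p)
      (congrArg₂ (fun p q => p ⊗ₜ[k] q) hAnorm2 hBnorm2)
    rw [Finset.sum_comm (s := s) (t := t)]
    simpa [hφ, TensorProduct.sum_tmul, TensorProduct.tmul_sum, map_sum,
      Algebra.TensorProduct.tmul_mul_tmul, Algebra.TensorProduct.one_def] using h
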